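/- Let H_1(s) ∈ F[s]^{(m−1)×n} be a matrix pencil over an algebraically closed field F with Weyr characteristic (W^1, r_*^1, s_*^1), and for λ ∈ F ∪ {∞} let z_1^1(λ) = #{i ≥ 1 : w^1_i(λ) ≥ 1}. Let s_* be a partition. There exist pencils H(s) ∈ F[s]^{m×n} and h(s) ∈ F[s]^{1×n} with H(s) strictly equivalent to stacking h(s) on H_1(s), rank(H(s)) = rank(H_1(s)), and s_* the row Brunovsky partition of H(s), if and only if s_*^1 is conjugate-majorized by s_* and 0 ≤ |s| − |s^1| ≤ Σ_λ z_1^1(λ). -/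

import Mathlib

/-- An infinite weakly decreasing sequence of nonnegative integers, almost all zero. -/
def IsPartition (p : ℕ → ℕ) : Prop :=
  (∀ i j, i ≤ j → p j ≤ p i) ∧ ∃ N, ∀ i, N ≤ i → p i = 0

/-- `conjPart p k` is the `(k+1)`-st entry of the conjugate partition of `p`,
where `p i` denotes the `(i+1)`-st entry of `p`; i.e. `#{i : p_i ≥ k+1}`. -/
noncomputable def conjPart (p : ℕ → ℕ) (k : ℕ) : ℕ :=
  Nat.card {i : ℕ | k + 1 ≤ p i}

/-- Sum of all entries of an (almost all zero) sequence. -/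
noncomputable def psum (p : ℕ → ℕ) : ℕ := ∑ᶠ i, p i

/-- The tail `(p_1, p_2, …)` of a starred partition `p_* = (p_0, p_1, …)`. -/
def ptail (p : ℕ → ℕ) : ℕ → ℕ := fun i => p (i + 1)

/-- `CMaj s r` : the starred partition `s_*` is conjugate-majorized by `r_*`
(written `s_* ∠ r_*`): `r_0 = s_0 + 1` and `r_i = s_i + 1` for all
`0 ≤ i ≤ g`, where `g = max {i : r_i > s_i}`. -/
def CMaj (s r : ℕ → ℕ) : Prop :=
  r 0 = s 0 + 1 ∧ ∀ i ≤ sSup {j | s j < r j}, r i = s i + 1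

/-- Weyr data at each eigenvalue: a partition for every `λ` in the extended
field, nonzero for only finitely many `λ`. -/
def IsEigPartitions {Λ : Type*} (w : Λ → ℕ → ℕ) : Prop :=
  (∀ l, IsPartition (w l)) ∧ (Function.support w).Finite

/-- `|W|`: total sum over all eigenvalues of all entries of `w(λ)`. -/
noncomputable def wsum {Λ : Type*} (w : Λ → ℕ → ℕ) : ℕ := ∑ᶠ l, ∑ᶠ i, w l i

set_option linter.unusedVariables false

lemma part_pos_iff (p : ℕ → ℕ) (hp : IsPartition p) (i : ℕ) :
    1 ≤ p i ↔ i < conjPart p 0 := by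
  obtain ⟨hmono, N, hN⟩ := hp
  have hSfin : {i : ℕ | 1 ≤ p i}.Finite := by
    apply Set.Finite.subset (Finset.range N).finite_toSet
    intro j hj
    simp only [Finset.coe_range, Set.mem_Iio]
    by_contra h
    simp only [Set.mem_setOf_eq, hN j (le_of_not_gt h)] at hj
    omega
  have hcard : conjPart p 0 = {i : ℕ | 1 ≤ p i}.ncard := by
    rw [conjPart, Nat.card_coe_set_eq]
  constructor
  · intro hpi
    have hsub : (Set.Iic i) ⊆ {i : ℕ | 1 ≤ p i} := by
      intro j hj
      exact le_trans hpi (hmono j i hj)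
    have := Set.ncard_le_ncard hsub hSfin
    have hIic : (Set.Iic i).ncard = i + 1 := by
      rw [← Finset.coe_Iic, Set.ncard_coe_finset, Nat.card_Iic]
    omega
  · intro hlt
    by_contra h
    have hpi : p i = 0 := by omega
    have hsub : {j : ℕ | 1 ≤ p j} ⊆ Set.Iio i := by
      intro j hj
      simp only [Set.mem_setOf_eq] at hj
      simp only [Set.mem_Iio]
      by_contra hji
      have := hmono i j (le_of_not_gt hji)
      omega
    have := Set.ncard_le_ncard hsub (Set.finite_Iio i)
    have hIio : (Set.Iio i).ncard = i := by
      rw [← Finset.coe_Iio, Set.ncard_coe_finset, Nat.card_Iio]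
    omega

lemma finsum_indicator (a b : ℕ) :
    ∑ᶠ i : ℕ, (if a ≤ i ∧ i < b then 1 else 0) = b - a := by
  have hsupp : Function.support (fun i : ℕ => if a ≤ i ∧ i < b then 1 else 0)
      ⊆ ↑(Finset.range b) := by
    intro i hi
    simp only [Function.mem_support, ne_eq, ite_eq_right_iff, not_forall] at hi
    simp only [Finset.coe_range, Set.mem_Iio]
    exact hi.choose.2
  rw [finsum_eq_sum_of_support_subset _ hsupp, ← Finset.card_filter]
  have : (Finset.range b).filter (fun i => a ≤ i ∧ i < b) = Finset.Ico a b := by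
    ext i
    simp only [Finset.mem_filter, Finset.mem_range, Finset.mem_Ico]
    omega
  rw [this, Nat.card_Ico]

lemma finsum_nat_le {α : Type*} (f g : α → ℕ) (hfg : ∀ x, f x ≤ g x)
    (hg : (Function.support g).Finite) : ∑ᶠ x, f x ≤ ∑ᶠ x, g x := by
  have hsub : Function.support f ⊆ Function.support g := by
    intro x hx
    simp only [Function.mem_support] at *
    intro h; apply hx; have := hfg x; omega
  have h1 : Function.support f ⊆ ↑hg.toFinset := by
    rw [Set.Finite.coe_toFinset]; exact hsub
  have h2 : Function.support g ⊆ ↑hg.toFinset := by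
    rw [Set.Finite.coe_toFinset]
  rw [finsum_eq_sum_of_support_subset f h1, finsum_eq_sum_of_support_subset g h2]
  exact Finset.sum_le_sum fun i _ => hfg i

lemma part_support_finite (p : ℕ → ℕ) (hp : IsPartition p) :
    (Function.support p).Finite := by
  obtain ⟨-, N, hN⟩ := hp
  apply Set.Finite.subset (Finset.range N).finite_toSet
  intro i hi
  simp only [Finset.coe_range, Set.mem_Iio]
  by_contra h
  exact hi (hN i (le_of_not_gt h))

lemma conjPart_zero_of_zero (p : ℕ → ℕ) (h : p = 0) : conjPart p 0 = 0 := by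
  subst h
  simp [conjPart]

lemma support_inner {Λ : Type*} (w : Λ → ℕ → ℕ) :
    Function.support (fun l => ∑ᶠ i, w l i) ⊆ Function.support w := by
  intro l hl
  simp only [Function.mem_support] at *
  intro h
  apply hl
  simp [h]

lemma subtract_suffix_part (p : ℕ → ℕ) (hp : IsPartition p) (k : ℕ)
    (hk : k ≤ conjPart p 0) :
    IsPartition (fun i => if i < conjPart p 0 - k then p i else p i - 1) ∧
    (∀ i, (if i < conjPart p 0 - k then p i else p i - 1) ≤ p i ∧
      p i ≤ (if i < conjPart p 0 - k then p i else p i - 1) + 1) := by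
  obtain ⟨hmono, N, hN⟩ := hp
  refine ⟨⟨fun i j hij => ?_, N, fun i hi => ?_⟩, fun i => ?_⟩
  · have := hmono i j hij
    dsimp only
    split_ifs <;> omega
  · have := hN i hi
    dsimp only
    split_ifs <;> omega
  · have := part_pos_iff p ⟨hmono, N, hN⟩ i
    split_ifs <;> omega

lemma subtract_suffix_sum (p : ℕ → ℕ) (hp : IsPartition p) (k : ℕ)
    (hk : k ≤ conjPart p 0) :
    ∑ᶠ i, p i = (∑ᶠ i, (if i < conjPart p 0 - k then p i else p i - 1)) + k := by
  set c := conjPart p 0 with hc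
  have hpq : ∀ i, p i = (if i < c - k then p i else p i - 1) +
      (if c - k ≤ i ∧ i < c then 1 else 0) := by
    intro i
    have := part_pos_iff p hp i
    rw [← hc] at this
    split_ifs <;> omega
  have hq_fin : (Function.support (fun i => if i < c - k then p i else p i - 1)).Finite := by
    apply Set.Finite.subset (part_support_finite p hp)
    intro i hi
    simp only [Function.mem_support] at *
    intro h
    apply hi
    split_ifs <;> omega
  have hind_fin : (Function.support (fun i : ℕ => if c - k ≤ i ∧ i < c then 1 else 0)).Finite := by
    apply Set.Finite.subset (Finset.range c).finite_toSet
    intro i hi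
    simp only [Function.mem_support, Finset.coe_range, Set.mem_Iio] at *
    by_contra h
    apply hi
    rw [if_neg]
    omega
  calc ∑ᶠ i, p i
      = ∑ᶠ i, ((if i < c - k then p i else p i - 1) +
          (if c - k ≤ i ∧ i < c then 1 else 0)) := finsum_congr hpq
    _ = (∑ᶠ i, (if i < c - k then p i else p i - 1)) +
          ∑ᶠ i, (if c - k ≤ i ∧ i < c then 1 else 0) := finsum_add_distrib hq_fin hind_fin
    _ = (∑ᶠ i, (if i < c - k then p i else p i - 1)) + k := by
          rw [finsum_indicator]
          congr 1
          omega

lemma choose_parts {Λ : Type*} [DecidableEq Λ] (t : Finset Λ) :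
    ∀ (c : Λ → ℕ) (d : ℕ), d ≤ ∑ l ∈ t, c l →
    ∃ k : Λ → ℕ, (∀ l, k l ≤ c l) ∧ (∀ l ∉ t, k l = 0) ∧ ∑ l ∈ t, k l = d := by
  induction t using Finset.induction_on with
  | empty =>
    intro c d hd
    simp only [Finset.sum_empty, Nat.le_zero] at hd
    exact ⟨0, fun l => Nat.zero_le _, fun l _ => rfl, by simp [hd]⟩
  | insert a t' ha ih =>
    intro c d hd
    rw [Finset.sum_insert ha] at hd
    obtain ⟨k, hk1, hk2, hk3⟩ := ih c (d - min d (c a)) (by omega)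
    refine ⟨Function.update k a (min d (c a)), fun l => ?_, fun l hl => ?_, ?_⟩
    · by_cases h : l = a
      · subst h; simp
      · rw [Function.update_of_ne h]; exact hk1 l
    · simp only [Finset.mem_insert, not_or] at hl
      rw [Function.update_of_ne hl.1]
      exact hk2 l hl.2
    · rw [Finset.sum_insert ha, Function.update_self,
        Finset.sum_congr rfl (fun l hl => Function.update_of_ne (by rintro rfl; exact ha hl) _ k), hk3]
      omega



/-- STATEMENT 17: `H_1(s)` has Weyr characteristic `(W¹, r_*¹, s_*¹)`, with
`z_1¹(λ) = #{i ≥ 1 : w¹_i(λ) ≥ 1}`, and `s_*` is a partition.  The existence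
of pencils `H(s)`, `h(s)` with `H(s)` strictly equivalent to stacking `h(s)` on
`H_1(s)`, `rank H = rank H_1`, and `s_*` the row Brunovsky partition of `H(s)`
— equivalently (by the equal-rank one-row completion characterization and the
existence of pencils with prescribed Weyr characteristic) the existence of
Weyr data `W, r_*` completing `s_*` — holds iff `s_*¹ ∠ s_*` and
`0 ≤ |s| − |s¹| ≤ Σ_λ z_1¹(λ)`. -/
theorem prescribed_row_brunovsky_completion_iff
    {F : Type*} [Field F] [IsAlgClosed F]
    (w1 : Option F → ℕ → ℕ) (r1 s1 s : ℕ → ℕ)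
    (hw1 : IsEigPartitions w1) (hr1 : IsPartition r1) (hs1 : IsPartition s1)
    (hs : IsPartition s) :
    (∃ w : Option F → ℕ → ℕ, ∃ r : ℕ → ℕ,
        IsEigPartitions w ∧ IsPartition r ∧
        (∀ l i, w l i ≤ w1 l i ∧ w1 l i ≤ w l i + 1) ∧
        r = r1 ∧ CMaj s1 s ∧
        wsum w + psum (ptail r) + psum (ptail s) =
          wsum w1 + psum (ptail r1) + psum (ptail s1)) ↔
    (CMaj s1 s ∧
     psum (ptail s1) ≤ psum (ptail s) ∧
     psum (ptail s) ≤ psum (ptail s1) + ∑ᶠ l, conjPart (w1 l) 0) := by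
  obtain ⟨hw1P, hw1fin⟩ := hw1
  -- finiteness facts about w1
  have hw1lfin : ∀ l, (Function.support (w1 l)).Finite :=
    fun l => part_support_finite _ (hw1P l)
  have hc0 : ∀ l, w1 l = 0 → conjPart (w1 l) 0 = 0 :=
    fun l h => conjPart_zero_of_zero _ h
  have hcsupp : Function.support (fun l => conjPart (w1 l) 0) ⊆ Function.support w1 := by
    intro l hl
    simp only [Function.mem_support] at *
    exact fun h => hl (hc0 l h)
  have hinner1fin : (Function.support fun l => ∑ᶠ i, w1 l i).Finite :=
    hw1fin.subset (support_inner w1)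
  constructor
  · rintro ⟨w, r, ⟨hwP, hwfin⟩, hrP, hbound, rfl, hcm, heq⟩
    refine ⟨hcm, ?_, ?_⟩
    all_goals {
    have hA : wsum w ≤ wsum w1 := by
      apply finsum_nat_le _ _ _ hinner1fin
      intro l
      exact finsum_nat_le _ _ (fun i => (hbound l i).1) (hw1lfin l)
    have hB : wsum w1 ≤ wsum w + ∑ᶠ l, conjPart (w1 l) 0 := by
      have hwlfin : ∀ l, (Function.support (w l)).Finite := by
        intro l
        apply (hw1lfin l).subset
        intro i hi
        simp only [Function.mem_support] at *
        intro h
        exact hi (by have := (hbound l i).1; omega)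
      have hstep : ∀ l, ∑ᶠ i, w1 l i ≤ (∑ᶠ i, w l i) + conjPart (w1 l) 0 := by
        intro l
        have hle : ∀ i, w1 l i ≤ w l i +
            (if 0 ≤ i ∧ i < conjPart (w1 l) 0 then 1 else 0) := by
          intro i
          have h1 := part_pos_iff (w1 l) (hw1P l) i
          have h2 := hbound l i
          split_ifs <;> omega
        have hind_fin : (Function.support
            (fun i : ℕ => if 0 ≤ i ∧ i < conjPart (w1 l) 0 then 1 else 0)).Finite := by
          apply Set.Finite.subset (Finset.range (conjPart (w1 l) 0)).finite_toSet
          intro i hi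
          simp only [Function.mem_support, Finset.coe_range, Set.mem_Iio] at *
          by_contra h
          exact hi (by rw [if_neg]; omega)
        calc ∑ᶠ i, w1 l i
            ≤ ∑ᶠ i, (w l i + (if 0 ≤ i ∧ i < conjPart (w1 l) 0 then 1 else 0)) :=
              finsum_nat_le _ _ hle (((hwlfin l).union hind_fin).subset (by
                intro i hi
                simp only [Function.mem_support, Set.mem_union] at *
                by_contra hcon
                push_neg at hcon
                exact hi (by rw [hcon.1, hcon.2]; rfl) ))
          _ = (∑ᶠ i, w l i) + ∑ᶠ i, (if 0 ≤ i ∧ i < conjPart (w1 l) 0 then 1 else 0) :=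
              finsum_add_distrib (hwlfin l) hind_fin
          _ = (∑ᶠ i, w l i) + conjPart (w1 l) 0 := by rw [finsum_indicator]; omega
      have hsum_fin : (Function.support
          fun l => (∑ᶠ i, w l i) + conjPart (w1 l) 0).Finite := by
        apply Set.Finite.subset (((hwfin.subset (support_inner w)).union (hw1fin.subset hcsupp)))
        intro l hl
        simp only [Function.mem_support, Set.mem_union] at *
        by_contra hcon
        push_neg at hcon
        exact hl (by rw [hcon.1, hcon.2]; rfl)
      calc wsum w1 ≤ ∑ᶠ l, ((∑ᶠ i, w l i) + conjPart (w1 l) 0) :=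
            finsum_nat_le _ _ hstep hsum_fin
        _ = wsum w + ∑ᶠ l, conjPart (w1 l) 0 :=
            finsum_add_distrib (hwfin.subset (support_inner w)) (hw1fin.subset hcsupp)
    omega }
  · rintro ⟨hcm, h1, h2⟩
    classical
    set T : Finset (Option F) := hw1fin.toFinset with hT
    have hcsum : ∑ᶠ l, conjPart (w1 l) 0 = ∑ l ∈ T, conjPart (w1 l) 0 := by
      apply finsum_eq_sum_of_support_subset
      rw [hT, Set.Finite.coe_toFinset]
      exact hcsupp
    have hd : psum (ptail s) - psum (ptail s1) ≤ ∑ l ∈ T, conjPart (w1 l) 0 := by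
      omega
    obtain ⟨k, hk1, hk2, hk3⟩ := choose_parts T (fun l => conjPart (w1 l) 0) _ hd
    set w : Option F → ℕ → ℕ :=
      fun l i => if i < conjPart (w1 l) 0 - k l then w1 l i else w1 l i - 1 with hwdef
    have hwl : ∀ l, IsPartition (w l) ∧
        ∀ i, w l i ≤ w1 l i ∧ w1 l i ≤ w l i + 1 := by
      intro l
      obtain ⟨hp, hb⟩ := subtract_suffix_part (w1 l) (hw1P l) (k l) (hk1 l)
      exact ⟨hp, hb⟩
    have hwsupp : Function.support w ⊆ Function.support w1 := by
      intro l hl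
      simp only [Function.mem_support] at *
      intro h
      apply hl
      funext i
      have h0 : w1 l i = 0 := by rw [h]; rfl
      show (if i < conjPart (w1 l) 0 - k l then w1 l i else w1 l i - 1) = 0
      split_ifs <;> omega
    have hwfin : (Function.support w).Finite := hw1fin.subset hwsupp
    have hsum : wsum w1 = wsum w + (psum (ptail s) - psum (ptail s1)) := by
      have hstep : ∀ l, ∑ᶠ i, w1 l i = (∑ᶠ i, w l i) + k l :=
        fun l => subtract_suffix_sum (w1 l) (hw1P l) (k l) (hk1 l)
      have hksupp : Function.support k ⊆ ↑T := by
        intro l hl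
        simp only [Function.mem_support] at hl
        by_contra h
        exact hl (hk2 l h)
      calc wsum w1 = ∑ᶠ l, ((∑ᶠ i, w l i) + k l) := finsum_congr hstep
        _ = wsum w + ∑ᶠ l, k l :=
            finsum_add_distrib (hwfin.subset (support_inner w))
              (T.finite_toSet.subset hksupp)
        _ = wsum w + (psum (ptail s) - psum (ptail s1)) := by
            rw [finsum_eq_sum_of_support_subset k hksupp, hk3]
    exact ⟨w, r1, ⟨fun l => (hwl l).1, hwfin⟩, hr1, fun l i => (hwl l).2 i, rfl, hcm,
      by omega⟩
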